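/- For binary words x and y, x is a suffix of y if and only if μ(x) is a suffix of μ(y), where μ is the Thue-Morse morphism. -/

import Mathlib

/-- The Thue-Morse morphism: μ(0)=01, μ(1)=10, with 0 = `false`, 1 = `true`. -/
def mu (w : List Bool) : List Bool := w.flatMap fun b => [b, !b]

lemma mu_nil : mu [] = [] := rfl

lemma mu_cons (a : Bool) (x : List Bool) : mu (a :: x) = a :: (!a) :: mu x := rfl

lemma mu_append (a b : List Bool) : mu (a ++ b) = mu a ++ mu b := by
  simp [mu]

lemma mu_length (w : List Bool) : (mu w).length = 2 * w.length := by
  induction w with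
  | nil => rfl
  | cons a x ih => simp [mu_cons, ih]; ring

lemma mu_inj : ∀ x y : List Bool, mu x = mu y → x = y
  | [], [], _ => rfl
  | [], b :: y, h => by simp [mu_nil, mu_cons] at h
  | a :: x, [], h => by simp [mu_nil, mu_cons] at h
  | a :: x, b :: y, h => by
    rw [mu_cons, mu_cons] at h
    obtain ⟨h1, h3⟩ : a = b ∧ mu x = mu y := by simpa using h
    rw [h1, mu_inj x y h3]

lemma suffix_of_suffix_append {l a b : List Bool} (h : l <:+ a ++ b)
    (hl : l.length ≤ b.length) : l <:+ b := by
  rw [List.suffix_iff_eq_drop] at h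
  have : (a ++ b).length - l.length = a.length + (b.length - l.length) := by
    simp [List.length_append]; omega
  rw [this, List.drop_length_add_append] at h
  rw [h]
  exact List.drop_suffix _ _

theorem mu_suffix_iff (x y : List Bool) : x <:+ y ↔ mu x <:+ mu y := by
  constructor
  · rintro ⟨t, rfl⟩
    exact ⟨mu t, (mu_append t x).symm⟩
  · intro h
    induction y with
    | nil =>
      have := h.length_le
      simp [mu_nil, mu_length] at this
      simp [this]
    | cons b y' ih =>
      by_cases hl : x.length ≤ y'.length
      · rw [mu_cons] at h
        have h' : mu x <:+ [b, !b] ++ mu y' := by simpa using h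
        have := ih (suffix_of_suffix_append h' (by simp [mu_length]; omega))
        exact this.trans (List.suffix_cons _ _)
      · have h1 := h.length_le
        rw [mu_length, mu_length] at h1
        have hxy : x.length = (b :: y').length := by simp at h1 ⊢; omega
        have : mu x = mu (b :: y') := List.IsSuffix.eq_of_length h (by
          rw [mu_length, mu_length, hxy])
        rw [mu_inj _ _ this]
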